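/- The function v(x) = ε e^{-α} x² / (2 - 8 ε e^{-α} log(x²)) satisfies: v(x) → 0, v'(x) → 0, v''(x) → 0 as x → 0⁺, while v'''(x) ~ C/(x log²|x|) as x → 0⁺ for some nonzero constant C (in particular v''' is unbounded near 0). -/

import Mathlib

open Real Filter Asymptotics

noncomputable def sDd (c x : ℝ) : ℝ := 2 - 16 * c * Real.log x
noncomputable def sg (c x : ℝ) : ℝ := c * x ^ 2 / sDd c x
noncomputable def sw1 (c x : ℝ) : ℝ :=
  (2 * c * x * sDd c x + 16 * c ^ 2 * x) / (sDd c x) ^ 2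
noncomputable def sw2 (c x : ℝ) : ℝ :=
  (2 * c * (sDd c x) ^ 2 + 48 * c ^ 2 * sDd c x + 512 * c ^ 3) / (sDd c x) ^ 3
noncomputable def sw3 (c x : ℝ) : ℝ :=
  (32 * c ^ 2 * (sDd c x) ^ 2 + 1536 * c ^ 3 * sDd c x + 24576 * c ^ 4) /
    (x * (sDd c x) ^ 4)

lemma sDd_hasDeriv (c x : ℝ) (hx : x ≠ 0) :
    HasDerivAt (fun y => sDd c y) (-(16 * c) / x) x := by
  have h := ((Real.hasDerivAt_log hx).const_mul (16 * c)).const_sub 2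
  refine h.congr_deriv (Eq.symm ?_)
  field_simp

lemma sg_hasDeriv (c x : ℝ) (hx : x ≠ 0) (hD : sDd c x ≠ 0) :
    HasDerivAt (fun y => sg c y) (sw1 c x) x := by
  have h1 : HasDerivAt (fun y : ℝ => c * y ^ 2) (c * (2 * x)) x := by
    simpa using (hasDerivAt_pow 2 x).const_mul c
  have h := h1.div (sDd_hasDeriv c x hx) hD
  have heq : (fun y => sg c y) = fun y => c * y ^ 2 / sDd c y := rfl
  rw [heq]
  refine h.congr_deriv (Eq.symm ?_)
  simp only [sw1]
  field_simp
  ring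

lemma sw1_hasDeriv (c x : ℝ) (hx : x ≠ 0) (hD : sDd c x ≠ 0) :
    HasDerivAt (fun y => sw1 c y) (sw2 c x) x := by
  have hd := sDd_hasDeriv c x hx
  have hnum : HasDerivAt (fun y => 2 * c * y * sDd c y + 16 * c ^ 2 * y)
      ((2 * c) * sDd c x + (2 * c * x) * (-(16 * c) / x) + 16 * c ^ 2) x := by
    have h1 : HasDerivAt (fun y : ℝ => 2 * c * y) (2 * c) x := by
      simpa using (hasDerivAt_id x).const_mul (2 * c)
    have h2 := h1.mul hd
    have h3 : HasDerivAt (fun y : ℝ => 16 * c ^ 2 * y) (16 * c ^ 2) x := by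
      simpa using (hasDerivAt_id x).const_mul (16 * c ^ 2)
    exact h2.add h3
  have hden : HasDerivAt (fun y => (sDd c y) ^ 2)
      ((2 : ℕ) * (sDd c x) ^ 1 * (-(16 * c) / x)) x := hd.pow 2
  have h := hnum.div hden (pow_ne_zero 2 hD)
  have heq : (fun y => sw1 c y)
      = fun y => (2 * c * y * sDd c y + 16 * c ^ 2 * y) / (sDd c y) ^ 2 := rfl
  rw [heq]
  refine h.congr_deriv (Eq.symm ?_)
  simp only [sw2]
  field_simp
  ring

lemma sw2_hasDeriv (c x : ℝ) (hx : x ≠ 0) (hD : sDd c x ≠ 0) :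
    HasDerivAt (fun y => sw2 c y) (sw3 c x) x := by
  have hd := sDd_hasDeriv c x hx
  have hsq : HasDerivAt (fun y => (sDd c y) ^ 2)
      ((2 : ℕ) * (sDd c x) ^ 1 * (-(16 * c) / x)) x := hd.pow 2
  have hnum : HasDerivAt
      (fun y => 2 * c * (sDd c y) ^ 2 + 48 * c ^ 2 * sDd c y + 512 * c ^ 3)
      ((2 * c) * ((2 : ℕ) * (sDd c x) ^ 1 * (-(16 * c) / x))
        + (48 * c ^ 2) * (-(16 * c) / x) + 0) x := by
    exact ((hsq.const_mul (2 * c)).add (hd.const_mul (48 * c ^ 2))).add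
      (hasDerivAt_const x (512 * c ^ 3))
  have hden : HasDerivAt (fun y => (sDd c y) ^ 3)
      ((3 : ℕ) * (sDd c x) ^ 2 * (-(16 * c) / x)) x := hd.pow 3
  have h := hnum.div hden (pow_ne_zero 3 hD)
  have heq : (fun y => sw2 c y)
      = fun y => (2 * c * (sDd c y) ^ 2 + 48 * c ^ 2 * sDd c y + 512 * c ^ 3)
        / (sDd c y) ^ 3 := rfl
  rw [heq]
  refine h.congr_deriv (Eq.symm ?_)
  simp only [sw3]
  field_simp
  ring

/-- For v(x) = ε e^{-α} x² / (2 - 8 ε e^{-α} log(x²)):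
v, v', v'' → 0 as x → 0⁺, while v''' ~ C/(x log²|x|) as x → 0⁺ for some C ≠ 0. -/
theorem stmt_15 (α ε : ℝ) (hε : 0 < ε) :
    let v : ℝ → ℝ := fun x =>
      ε * Real.exp (-α) * x^2 / (2 - 8 * ε * Real.exp (-α) * Real.log (x^2))
    Tendsto v (nhdsWithin 0 (Set.Ioi 0)) (nhds 0) ∧
    Tendsto (deriv v) (nhdsWithin 0 (Set.Ioi 0)) (nhds 0) ∧
    Tendsto (deriv (deriv v)) (nhdsWithin 0 (Set.Ioi 0)) (nhds 0) ∧
    ∃ C : ℝ, C ≠ 0 ∧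
      (deriv (deriv (deriv v))) ~[nhdsWithin 0 (Set.Ioi 0)]
        (fun x => C / (x * (Real.log |x|)^2)) := by
  intro v
  obtain ⟨c, hc_def, hc⟩ : ∃ c : ℝ, c = ε * Real.exp (-α) ∧ 0 < c :=
    ⟨_, rfl, mul_pos hε (Real.exp_pos _)⟩
  have hvg : v = fun y => sg c y := by
    funext x
    show ε * Real.exp (-α) * x ^ 2 / (2 - 8 * ε * Real.exp (-α) * Real.log (x ^ 2))
      = sg c x
    simp only [sg, sDd, Real.log_pow, hc_def]
    push_cast
    ring_nf
  rw [hvg]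
  -- the set where everything is nice
  set b : ℝ := min (Real.exp (1 / (8 * c))) 1 with hb_def
  have hb : 0 < b := lt_min (Real.exp_pos _) one_pos
  have hS : Set.Ioo (0 : ℝ) b ∈ nhdsWithin (0 : ℝ) (Set.Ioi 0) :=
    Ioo_mem_nhdsGT hb
  have hmemD : ∀ x ∈ Set.Ioo (0 : ℝ) b, 0 < sDd c x := by
    intro x hx
    have hlog : Real.log x < 1 / (8 * c) := by
      have : x < Real.exp (1 / (8 * c)) := lt_of_lt_of_le hx.2 (min_le_left _ _)
      calc Real.log x < Real.log (Real.exp (1 / (8 * c))) :=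
            Real.log_lt_log hx.1 this
        _ = 1 / (8 * c) := Real.log_exp _
    have h16 : 16 * c * Real.log x < 16 * c * (1 / (8 * c)) := by
      apply mul_lt_mul_of_pos_left hlog (by positivity)
    have : 16 * c * (1 / (8 * c)) = 2 := by field_simp; ring
    simp only [sDd]
    nlinarith
  have hmemD' : ∀ x ∈ Set.Ioo (0 : ℝ) b, sDd c x ≠ 0 := fun x hx =>
    ne_of_gt (hmemD x hx)
  -- tendsto of 1/D
  have hDtop : Tendsto (fun x => sDd c x) (nhdsWithin 0 (Set.Ioi 0)) atTop := by
    have h1 : Tendsto (fun x => 16 * c * Real.log x)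
        (nhdsWithin 0 (Set.Ioi 0)) atBot :=
      (Real.tendsto_log_nhdsGT_zero).const_mul_atBot (by positivity)
    have h2 : Tendsto (fun x => -(16 * c * Real.log x))
        (nhdsWithin 0 (Set.Ioi 0)) atTop := tendsto_neg_atBot_atTop.comp h1
    have h3 := tendsto_atTop_add_const_left (nhdsWithin 0 (Set.Ioi 0)) 2 h2
    exact h3.congr (fun x => by simp only [sDd]; ring)
  have hDinv : Tendsto (fun x => (sDd c x)⁻¹) (nhdsWithin 0 (Set.Ioi 0)) (nhds 0) :=
    hDtop.inv_tendsto_atTop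
  have hxid : Tendsto (fun x : ℝ => x) (nhdsWithin 0 (Set.Ioi 0)) (nhds 0) :=
    tendsto_id.mono_left nhdsWithin_le_nhds
  -- part 1
  have part1 : Tendsto (fun y => sg c y) (nhdsWithin 0 (Set.Ioi 0)) (nhds 0) := by
    have h := ((hxid.mul hxid).const_mul c).mul hDinv
    simp only [mul_zero, zero_mul] at h
    exact h.congr (fun x => by simp only [sg]; rw [sq]; ring)
  -- derivative identities
  have hd1 : ∀ x ∈ Set.Ioo (0 : ℝ) b, deriv (fun y => sg c y) x = sw1 c x := by
    intro x hx
    exact (sg_hasDeriv c x (ne_of_gt hx.1) (hmemD' x hx)).deriv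
  have hopen : IsOpen (Set.Ioo (0 : ℝ) b) := isOpen_Ioo
  have hd2 : ∀ x ∈ Set.Ioo (0 : ℝ) b,
      deriv (deriv (fun y => sg c y)) x = sw2 c x := by
    intro x hx
    have heq : deriv (fun y => sg c y) =ᶠ[nhds x] fun y => sw1 c y :=
      Filter.eventuallyEq_of_mem (hopen.mem_nhds hx) (fun y hy => hd1 y hy)
    rw [heq.deriv_eq]
    exact (sw1_hasDeriv c x (ne_of_gt hx.1) (hmemD' x hx)).deriv
  have hd3 : ∀ x ∈ Set.Ioo (0 : ℝ) b,
      deriv (deriv (deriv (fun y => sg c y))) x = sw3 c x := by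
    intro x hx
    have heq : deriv (deriv (fun y => sg c y)) =ᶠ[nhds x] fun y => sw2 c y :=
      Filter.eventuallyEq_of_mem (hopen.mem_nhds hx) (fun y hy => hd2 y hy)
    rw [heq.deriv_eq]
    exact (sw2_hasDeriv c x (ne_of_gt hx.1) (hmemD' x hx)).deriv
  -- part 2
  have part2 : Tendsto (deriv (fun y => sg c y))
      (nhdsWithin 0 (Set.Ioi 0)) (nhds 0) := by
    have hu : Tendsto (fun x => x * (2 * c * (sDd c x)⁻¹
        + 16 * c ^ 2 * ((sDd c x)⁻¹) ^ 2)) (nhdsWithin 0 (Set.Ioi 0)) (nhds 0) := by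
      have h := hxid.mul (((hDinv.const_mul (2 * c)).add
        (((hDinv.mul hDinv).const_mul (16 * c ^ 2)))))
      simp only [mul_zero, zero_mul, add_zero, zero_add] at h
      exact h.congr (fun x => by rw [sq]; ring)
    refine hu.congr' ?_
    filter_upwards [hS] with x hx
    rw [hd1 x hx]
    have hD := hmemD' x hx
    simp only [sw1]
    field_simp
  -- part 3
  have part3 : Tendsto (deriv (deriv (fun y => sg c y)))
      (nhdsWithin 0 (Set.Ioi 0)) (nhds 0) := by
    have hu : Tendsto (fun x => 2 * c * (sDd c x)⁻¹
        + 48 * c ^ 2 * ((sDd c x)⁻¹) ^ 2 + 512 * c ^ 3 * ((sDd c x)⁻¹) ^ 3)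
        (nhdsWithin 0 (Set.Ioi 0)) (nhds 0) := by
      have h := ((hDinv.const_mul (2 * c)).add
        ((hDinv.mul hDinv).const_mul (48 * c ^ 2))).add
        (((hDinv.mul hDinv).mul hDinv).const_mul (512 * c ^ 3))
      simp only [mul_zero, zero_mul, add_zero, zero_add] at h
      exact h.congr (fun x => by ring)
    refine hu.congr' ?_
    filter_upwards [hS] with x hx
    rw [hd2 x hx]
    have hD := hmemD' x hx
    simp only [sw2]
    field_simp
  -- part 4
  refine ⟨part1, part2, part3, 1 / 8, by norm_num, ?_⟩
  have hfne : ∀ᶠ x in nhdsWithin 0 (Set.Ioi 0),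
      (1 / 8 : ℝ) / (x * (Real.log |x|) ^ 2) ≠ 0 := by
    filter_upwards [hS] with x hx
    have hx0 : 0 < x := hx.1
    have hx1 : x < 1 := lt_of_lt_of_le hx.2 (min_le_right _ _)
    have hlogne : Real.log |x| ≠ 0 := by
      rw [abs_of_pos hx0]
      exact ne_of_lt (Real.log_neg hx0 hx1)
    positivity
  rw [Asymptotics.isEquivalent_iff_tendsto_one hfne]
  -- the ratio
  have hLD : Tendsto (fun x => Real.log x * (sDd c x)⁻¹)
      (nhdsWithin 0 (Set.Ioi 0)) (nhds (-(16 * c)⁻¹)) := by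
    have hlinv : Tendsto (fun x => (Real.log x)⁻¹)
        (nhdsWithin 0 (Set.Ioi 0)) (nhds 0) := by
      have h := (tendsto_neg_atBot_atTop.comp
        Real.tendsto_log_nhdsGT_zero).inv_tendsto_atTop
      have h2 := h.neg
      simp only [neg_zero] at h2
      exact h2.congr (fun x => by
        show -((-(Real.log x))⁻¹) = (Real.log x)⁻¹; rw [inv_neg, neg_neg])
    have hbase : Tendsto (fun x => 2 * (Real.log x)⁻¹ - 16 * c)
        (nhdsWithin 0 (Set.Ioi 0)) (nhds (-(16 * c))) := by
      have h := (hlinv.const_mul 2).sub_const (16 * c)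
      simpa using h
    have hinv := hbase.inv₀ (by
      simp only [ne_eq, neg_eq_zero]
      positivity)
    have hval : (-(16 * c))⁻¹ = -(16 * c)⁻¹ := by rw [inv_neg]
    rw [hval] at hinv
    refine hinv.congr' ?_
    filter_upwards [hS] with x hx
    have hx0 : 0 < x := hx.1
    have hx1 : x < 1 := lt_of_lt_of_le hx.2 (min_le_right _ _)
    have hlogne : Real.log x ≠ 0 := ne_of_lt (Real.log_neg hx0 hx1)
    have hD := hmemD' x hx
    simp only [sDd] at hD ⊢
    field_simp
  have hratio : Tendsto (fun x => 256 * c ^ 2 * (Real.log x * (sDd c x)⁻¹) ^ 2 *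
      (1 + 48 * c * (sDd c x)⁻¹ + 768 * c ^ 2 * ((sDd c x)⁻¹) ^ 2))
      (nhdsWithin 0 (Set.Ioi 0)) (nhds 1) := by
    have h := ((hLD.mul hLD).const_mul (256 * c ^ 2)).mul
      ((((hDinv.const_mul (48 * c)).add
        ((hDinv.mul hDinv).const_mul (768 * c ^ 2))).const_add 1))
    have hval : 256 * c ^ 2 * (-(16 * c)⁻¹ * -(16 * c)⁻¹) *
        (1 + (48 * c * 0 + 768 * c ^ 2 * (0 * 0))) = 1 := by
      field_simp
      ring
    rw [hval] at h
    exact h.congr (fun x => by rw [sq, sq]; ring)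
  refine hratio.congr' ?_
  filter_upwards [hS] with x hx
  have hx0 : 0 < x := hx.1
  have hx1 : x < 1 := lt_of_lt_of_le hx.2 (min_le_right _ _)
  have hlogne : Real.log x ≠ 0 := ne_of_lt (Real.log_neg hx0 hx1)
  have hD := hmemD' x hx
  show 256 * c ^ 2 * (Real.log x * (sDd c x)⁻¹) ^ 2 *
      (1 + 48 * c * (sDd c x)⁻¹ + 768 * c ^ 2 * ((sDd c x)⁻¹) ^ 2)
    = deriv (deriv (deriv (fun y => sg c y))) x /
      ((1 / 8 : ℝ) / (x * (Real.log |x|) ^ 2))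
  rw [hd3 x hx, abs_of_pos hx0]
  simp only [sw3]
  field_simp
  ring
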